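/- One-to-one correspondence (Claim 1 of Lemma 2 in the discrete case q=1): in the digraph G^(1) built from a 3-CNF formula with n variables, there is a bijection between 0-1 assignments to x_1,...,x_n and s-t paths that use only solid (normal or fat) arcs; the path for assignment σ traverses, for each i, the subpath through the x_i-literal nodes if σ(x_i)=1 and through the ¬x_i-literal nodes if σ(x_i)=0. -/

import Mathlib

/-- Vertices of the digraph `G^(1)` built from a 3-CNF formula with `n`
variables and `m` clauses: the source `s`, the sink `t`, variable nodes
`u_1,…,u_n`, the in/out literal nodes of the `m` clause gadgets (node
`lit i b j` is a literal node for `x_i` if `b = true` and for `¬x_i` if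
`b = false`; the index `j ∈ Fin (2m)` enumerates the in- and out-literal nodes
of the `m` gadgets), and the gadget source/sink nodes `gs j`, `gt j`. -/
inductive V14 (n m : ℕ) : Type where
  | s : V14 n m
  | t : V14 n m
  | u : Fin n → V14 n m
  | lit : Fin n → Bool → Fin (2 * m) → V14 n m
  | gs : Fin m → V14 n m
  | gt : Fin m → V14 n m

/-- The solid (normal or fat) arcs of `G^(1)`: `s → u_1`; from each `u_i` two
disjoint subpaths through all the `x_i`-literal nodes (resp. all the
`¬x_i`-literal nodes) of all gadgets, ending at `u_{i+1}` (or at `t` for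
`i = n`). -/
def SolidArc (n m : ℕ) : V14 n m → V14 n m → Prop
  | .s, .u i => i.val = 0
  | .u i, .lit i' _ j => i' = i ∧ j.val = 0
  | .lit i b j, .lit i' b' j' => i' = i ∧ b' = b ∧ j'.val = j.val + 1
  | .lit i _ j, .u i' => i'.val = i.val + 1 ∧ j.val = 2 * m - 1
  | .lit i _ j, .t => i.val = n - 1 ∧ j.val = 2 * m - 1
  | _, _ => False

/-- The non-solid arcs of `G^(1)`: the dashed arcs `s → s_{C_j}`, the gadget
recovery paths (collapsed to single arcs `s_{C_j} → t_{C_j}`), and the dotted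
arcs `t_{C_j} → t`. -/
def OtherArc (n m : ℕ) : V14 n m → V14 n m → Prop
  | .s, .gs _ => True
  | .gs j, .gt j' => j' = j
  | .gt _, .t => True
  | _, _ => False

/-- All arcs of `G^(1)`. -/
def Arc14 (n m : ℕ) (a b : V14 n m) : Prop := SolidArc n m a b ∨ OtherArc n m a b

def IsPath {α : Type*} (A : α → α → Prop) (s t : α) (p : List α) : Prop :=
  p.Chain' A ∧ p.head? = some s ∧ p.getLast? = some t

namespace PathBij

variable (n m : ℕ)

/-- position of a vertex along solid paths -/
def posV : V14 n m → ℕ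
  | .s => 0
  | .u i => 1 + i.val * (2*m+1)
  | .lit i _ j => 2 + i.val * (2*m+1) + j.val
  | .t => n * (2*m+1) + 1
  | .gs _ => 0
  | .gt _ => 0

/-- canonical vertex at position k for assignment σ -/
def vtx (σ : Fin n → Bool) (k : ℕ) : V14 n m :=
  if hk : k = 0 then .s
  else if hk2 : k ≤ n * (2*m+1) then
    if hr : (k-1) % (2*m+1) = 0 then
      .u ⟨(k-1)/(2*m+1), by
        have h1 : k - 1 < n * (2*m+1) := by omega
        exact (Nat.div_lt_iff_lt_mul (by omega)).mpr h1⟩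
    else
      .lit ⟨(k-1)/(2*m+1), by
          have h1 : k - 1 < n * (2*m+1) := by omega
          exact (Nat.div_lt_iff_lt_mul (by omega)).mpr h1⟩
        (σ ⟨(k-1)/(2*m+1), by
          have h1 : k - 1 < n * (2*m+1) := by omega
          exact (Nat.div_lt_iff_lt_mul (by omega)).mpr h1⟩)
        ⟨(k-1) % (2*m+1) - 1, by
          have h1 : (k-1) % (2*m+1) < 2*m+1 := Nat.mod_lt _ (by omega)
          omega⟩
  else .t

lemma vtx_zero (σ : Fin n → Bool) : vtx n m σ 0 = .s := by simp [vtx]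

lemma vtx_last (σ : Fin n → Bool) : vtx n m σ (n * (2*m+1) + 1) = .t := by
  rw [vtx, dif_neg (by omega), dif_neg (by omega)]

lemma vtx_eq (σ : Fin n → Bool) {i r : ℕ} (hi : i < n) (hr : r < 2*m+1) :
    vtx n m σ (1 + i * (2*m+1) + r) =
      if h0 : r = 0 then .u ⟨i, hi⟩
      else .lit ⟨i, hi⟩ (σ ⟨i, hi⟩) ⟨r - 1, by omega⟩ := by
  have hle : (i+1) * (2*m+1) ≤ n * (2*m+1) := Nat.mul_le_mul_right _ (by omega)
  have hexp : (i+1) * (2*m+1) = i * (2*m+1) + (2*m+1) := by ring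
  have hk1 : (1 + i * (2*m+1) + r) - 1 = r + i * (2*m+1) := by omega
  have hdiv : ((1 + i * (2*m+1) + r) - 1) / (2*m+1) = i := by
    rw [hk1, Nat.add_mul_div_right _ _ (by omega : 0 < 2*m+1), Nat.div_eq_of_lt hr]
    omega
  have hmod : ((1 + i * (2*m+1) + r) - 1) % (2*m+1) = r := by
    rw [hk1, Nat.add_mul_mod_self_right, Nat.mod_eq_of_lt hr]
  rw [vtx, dif_neg (by omega), dif_pos (by omega)]
  by_cases h0 : r = 0
  · rw [dif_pos (by rw [hmod]; exact h0), dif_pos h0]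
    simp [hdiv]
  · rw [dif_neg (by rw [hmod]; exact h0), dif_neg h0]
    simp [hdiv, hmod]

lemma exists_rep {k : ℕ} (h1 : 1 ≤ k) (h2 : k ≤ n * (2*m+1)) :
    ∃ i r, i < n ∧ r < 2*m+1 ∧ k = 1 + i * (2*m+1) + r := by
  refine ⟨(k-1) / (2*m+1), (k-1) % (2*m+1), ?_, Nat.mod_lt _ (by omega), ?_⟩
  · exact (Nat.div_lt_iff_lt_mul (by omega)).mpr (by omega)
  · have := Nat.div_add_mod (k-1) (2*m+1)
    have hc : (k-1) / (2*m+1) * (2*m+1) = (2*m+1) * ((k-1) / (2*m+1)) := Nat.mul_comm _ _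
    omega

lemma pos_vtx (σ : Fin n → Bool) {k : ℕ} (hk : k < n * (2*m+1) + 2) :
    posV n m (vtx n m σ k) = k := by
  rcases Nat.eq_zero_or_pos k with h0 | h1
  · subst h0; rw [vtx_zero]; rfl
  rcases Nat.lt_or_ge k (n * (2*m+1) + 1) with h2 | h2
  · obtain ⟨i, r, hi, hr, hk'⟩ := exists_rep n m h1 (by omega)
    subst hk'
    rw [vtx_eq n m σ hi hr]
    by_cases h0 : r = 0
    · rw [dif_pos h0]; simp [posV]; omega
    · rw [dif_neg h0]; simp [posV]; omega
  · have : k = n * (2*m+1) + 1 := by omega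
    subst this; rw [vtx_last]; rfl

lemma vtx_chain (hn : 0 < n) (hm : 0 < m) (σ : Fin n → Bool) {k : ℕ}
    (hk : k + 1 < n * (2*m+1) + 2) :
    SolidArc n m (vtx n m σ k) (vtx n m σ (k+1)) := by
  rcases Nat.eq_zero_or_pos k with h0 | h1
  · subst h0
    rw [vtx_zero]
    rw [show (0:ℕ) + 1 = 1 + 0 * (2*m+1) + 0 from by ring,
      vtx_eq n m σ (i := 0) (r := 0) hn (by omega), dif_pos rfl]
    simp [SolidArc]
  · obtain ⟨i, r, hi, hr, hk'⟩ := exists_rep n m h1 (by omega)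
    subst hk'
    rw [vtx_eq n m σ hi hr]
    rcases Nat.lt_or_ge r (2*m) with h2 | h2
    · -- next is lit ⟨i⟩ _ ⟨r⟩
      by_cases h0 : r = 0
      · rw [dif_pos h0]
        rw [show 1 + i * (2*m+1) + r + 1 = 1 + i * (2*m+1) + (r+1) from by omega,
          vtx_eq n m σ (r := r+1) hi (by omega), dif_neg (by omega)]
        subst h0
        simp [SolidArc]
      · rw [dif_neg h0]
        rw [show 1 + i * (2*m+1) + r + 1 = 1 + i * (2*m+1) + (r+1) from by omega,
          vtx_eq n m σ (r := r+1) hi (by omega), dif_neg (by omega)]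
        simp [SolidArc]
        omega
    · -- r = 2m, next is u ⟨i+1⟩ or t
      have hr2 : r = 2*m := by omega
      have h0 : r ≠ 0 := by omega
      rw [dif_neg h0]
      have hexp : (i+1) * (2*m+1) = i * (2*m+1) + (2*m+1) := by ring
      rcases Nat.lt_or_ge (i+1) n with h3 | h3
      · rw [show 1 + i * (2*m+1) + r + 1 = 1 + (i+1) * (2*m+1) + 0 from by omega,
          vtx_eq n m σ (i := i+1) (r := 0) h3 (by omega), dif_pos rfl]
        simp [SolidArc]
        omega
      · have h4 : i + 1 = n := by omega
        have hnexp : n * (2*m+1) = i * (2*m+1) + (2*m+1) := by rw [← h4]; ring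
        rw [show 1 + i * (2*m+1) + r + 1 = n * (2*m+1) + 1 from by omega, vtx_last]
        simp [SolidArc]; omega

lemma solid_pos {a b : V14 n m} (h : SolidArc n m a b) :
    posV n m b = posV n m a + 1 := by
  cases a with
  | s =>
    cases b <;> simp [SolidArc] at h <;> simp [posV, h]
  | u i =>
    cases b <;> simp [SolidArc] at h
    case lit i' b' j =>
      obtain ⟨h1, h2⟩ := h; subst h1; simp [posV]; omega
  | lit i bb j =>
    cases b <;> simp [SolidArc] at h
    case t =>
      obtain ⟨h1, h2⟩ := h
      have hilt := i.isLt
      have hjlt := j.isLt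
      have h4 : n = i.val + 1 := by omega
      have hexp : (i.val+1) * (2*m+1) = i.val * (2*m+1) + (2*m+1) := by ring
      have hnexp : n * (2*m+1) = (i.val+1) * (2*m+1) :=
        congrArg (fun x => x * (2*m+1)) h4
      simp [posV]; omega
    case u i' =>
      obtain ⟨h1, h2⟩ := h
      have hjlt := j.isLt
      have hexp : (i.val+1) * (2*m+1) = i.val * (2*m+1) + (2*m+1) := by ring
      simp [posV, h1]; omega
    case lit i' b' j' =>
      obtain ⟨h1, h2, h3⟩ := h; subst h1; simp [posV]; omega
  | t => cases b <;> simp [SolidArc] at h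
  | gs q => cases b <;> simp [SolidArc] at h
  | gt q => cases b <;> simp [SolidArc] at h

lemma vtx_lit_b (σ : Fin n → Bool) {k : ℕ} {i : Fin n} {b : Bool} {j : Fin (2*m)}
    (h : vtx n m σ k = .lit i b j) : b = σ i := by
  rcases Nat.eq_zero_or_pos k with h0 | h1
  · subst h0; rw [vtx_zero] at h; exact absurd h (by simp)
  rcases Nat.lt_or_ge (n * (2*m+1)) k with h2 | h2
  · rw [vtx, dif_neg (by omega), dif_neg (by omega)] at h
    exact absurd h (by simp)
  · obtain ⟨i', r, hi, hr, hk'⟩ := exists_rep n m h1 h2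
    subst hk'
    rw [vtx_eq n m σ hi hr] at h
    by_cases h0 : r = 0
    · rw [dif_pos h0] at h; exact absurd h (by simp)
    · rw [dif_neg h0] at h
      injection h with hi' hb hj
      rw [← hb, hi']

end PathBij


/-- Claim 1 (case `q = 1`): there is a one-to-one correspondence between 0-1
assignments to `x_1,…,x_n` and the `s`-`t` paths of `G^(1)` that use only solid
arcs; the path for `σ` traverses the `x_i`-literal nodes if `σ i = true` and
the `¬x_i`-literal nodes if `σ i = false`. -/
theorem assignment_path_bijection (n m : ℕ) (hn : 0 < n) (hm : 0 < m) :
    ∃ F : (Fin n → Bool) → List (V14 n m),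
      (∀ σ, IsPath (Arc14 n m) V14.s V14.t (F σ) ∧ (F σ).Chain' (SolidArc n m)) ∧
      Function.Injective F ∧
      (∀ p : List (V14 n m), IsPath (Arc14 n m) V14.s V14.t p →
        p.Chain' (SolidArc n m) → ∃ σ, F σ = p) ∧
      (∀ σ (i : Fin n) (b : Bool) (j : Fin (2 * m)),
        V14.lit i b j ∈ F σ ↔ b = σ i) := by
  classical
  have hm2 : 0 < 2*m := by omega
  set F : (Fin n → Bool) → List (V14 n m) :=
    fun σ => List.ofFn (fun k : Fin (n*(2*m+1)+2) => PathBij.vtx n m σ k.val) with hF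
  have hmem : ∀ σ (i : Fin n) (b : Bool) (j : Fin (2*m)), V14.lit i b j ∈ F σ ↔ b = σ i := by
    intro σ i b j
    constructor
    · intro h
      simp only [hF] at h
      obtain ⟨k, hk⟩ := List.mem_ofFn.mp h
      exact PathBij.vtx_lit_b n m σ hk
    · intro hb
      subst hb
      simp only [hF]
      have hile := i.isLt
      have hjle := j.isLt
      have hexp : (i.val+1) * (2*m+1) = i.val * (2*m+1) + (2*m+1) := by ring
      have hle : (i.val+1) * (2*m+1) ≤ n * (2*m+1) := Nat.mul_le_mul_right _ (by omega)
      have hkb : 1 + i.val * (2*m+1) + (j.val+1) < n * (2*m+1) + 2 := by omega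
      apply List.mem_ofFn.mpr
      refine ⟨⟨1 + i.val * (2*m+1) + (j.val+1), hkb⟩, ?_⟩
      show PathBij.vtx n m σ (1 + i.val * (2*m+1) + (j.val+1)) = _
      rw [PathBij.vtx_eq n m σ (i := i.val) (r := j.val+1) i.isLt (by omega), dif_neg (by omega)]
      simp
  have hchain : ∀ σ, (F σ).Chain' (SolidArc n m) := by
    intro σ
    simp only [hF]
    apply List.isChain_iff_getElem.mpr
    intro k hk
    simp only [List.length_ofFn] at hk
    simp only [List.getElem_ofFn]
    exact PathBij.vtx_chain n m hn hm σ (k := k) (by omega)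
  have hhead : ∀ σ, (F σ).head? = some V14.s := by
    intro σ
    simp only [hF]
    have h0 : 0 < (List.ofFn (fun k : Fin (n*(2*m+1)+2) => PathBij.vtx n m σ k.val)).length := by
      simp
    rw [List.head?_eq_getElem?, List.getElem?_eq_getElem h0]
    have : (List.ofFn (fun k : Fin (n*(2*m+1)+2) => PathBij.vtx n m σ k.val)).get ⟨0, h0⟩
        = PathBij.vtx n m σ 0 := by
      rw [List.get_ofFn]
      rfl
    rw [List.get_eq_getElem] at this
    rw [this, PathBij.vtx_zero]
  have hlastF : ∀ σ, (F σ).getLast? = some V14.t := by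
    intro σ
    simp only [hF]
    have hlen : (List.ofFn (fun k : Fin (n*(2*m+1)+2) => PathBij.vtx n m σ k.val)).length
        = n*(2*m+1)+2 := by simp
    have h0 : n*(2*m+1)+1 <
        (List.ofFn (fun k : Fin (n*(2*m+1)+2) => PathBij.vtx n m σ k.val)).length := by
      simp
    rw [List.getLast?_eq_getElem?, hlen]
    rw [show n*(2*m+1)+2-1 = n*(2*m+1)+1 from by omega]
    rw [List.getElem?_eq_getElem h0]
    have : (List.ofFn (fun k : Fin (n*(2*m+1)+2) => PathBij.vtx n m σ k.val)).get
        ⟨n*(2*m+1)+1, h0⟩ = PathBij.vtx n m σ (n*(2*m+1)+1) := by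
      rw [List.get_ofFn]
      rfl
    rw [List.get_eq_getElem] at this
    rw [this, PathBij.vtx_last]
  have hinj : Function.Injective F := by
    intro σ σ' hEq
    funext i
    have h1 : (V14.lit i (σ i) ⟨0, hm2⟩ : V14 n m) ∈ F σ := (hmem σ i (σ i) ⟨0, hm2⟩).mpr rfl
    rw [hEq] at h1
    exact (hmem σ' i (σ i) ⟨0, hm2⟩).mp h1
  have path_pos : ∀ p : List (V14 n m), p.Chain' (SolidArc n m) → p.head? = some V14.s →
      ∀ k (h : k < p.length), PathBij.posV n m (p.get ⟨k, h⟩) = k := by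
    intro p hc hh k
    induction k with
    | zero =>
      intro h
      have h0 : p.get ⟨0, h⟩ = V14.s := by
        rw [List.head?_eq_getElem?, List.getElem?_eq_getElem h] at hh
        rw [List.get_eq_getElem]
        exact Option.some.inj hh
      rw [h0]
      rfl
    | succ k ih =>
      intro h
      have hk : k < p.length := by omega
      have harc : SolidArc n m (p.get ⟨k, hk⟩) (p.get ⟨k+1, h⟩) := List.isChain_iff_getElem.mp hc k (by omega)
      have hstep := PathBij.solid_pos n m harc
      rw [ih hk] at hstep
      exact hstep
  have hcomp : ∀ p, IsPath (Arc14 n m) V14.s V14.t p → p.Chain' (SolidArc n m) →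
      ∃ σ, F σ = p := by
    intro p hp hsolid
    obtain ⟨hchainA, hh, hl⟩ := hp
    have hlen0 : 0 < p.length := by
      cases p with
      | nil => simp at hh
      | cons a l => simp
    have hposk := path_pos p hsolid hh
    have hlast : p.get ⟨p.length - 1, by omega⟩ = V14.t := by
      rw [List.getLast?_eq_getElem?, List.getElem?_eq_getElem (by omega : p.length - 1 < p.length)] at hl
      rw [List.get_eq_getElem]
      exact Option.some.inj hl
    have hlen : p.length = n * (2*m+1) + 2 := by
      have hx := hposk (p.length - 1) (by omega)
      rw [hlast] at hx
      simp only [PathBij.posV] at hx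
      omega
    set σ : Fin n → Bool := fun i =>
      match p[1 + i.val * (2*m+1) + 1]? with
      | some (V14.lit _ b _) => b
      | _ => false with hσ
    have key : ∀ k (h : k < p.length), p.get ⟨k, h⟩ = PathBij.vtx n m σ k := by
      intro k
      induction k with
      | zero =>
        intro h
        rw [PathBij.vtx_zero]
        rw [List.head?_eq_getElem?, List.getElem?_eq_getElem h] at hh
        rw [List.get_eq_getElem]
        exact Option.some.inj hh
      | succ k ih =>
        intro h
        have hk : k < p.length := by omega
        have harc : SolidArc n m (p.get ⟨k, hk⟩) (p.get ⟨k + 1, by omega⟩) := List.isChain_iff_getElem.mp hsolid k (by omega)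
        rw [ih hk] at harc
        have hkk : p.get ⟨k + 1, by omega⟩ = p.get ⟨k + 1, h⟩ := rfl
        rw [hkk] at harc
        rcases Nat.eq_zero_or_pos k with h0 | h1
        · subst h0
          rw [PathBij.vtx_zero] at harc
          rcases hq : p.get ⟨0 + 1, h⟩ with _ | _ | i0 | ⟨i0, c, j0⟩ | q0 | q0
          all_goals rw [hq] at harc
          all_goals simp only [SolidArc, Fin.val_mk] at harc
          rw [show (0:ℕ) + 1 = 1 + 0 * (2*m+1) + 0 from by ring,
            PathBij.vtx_eq n m σ (i := 0) (r := 0) hn (by omega), dif_pos rfl]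
          congr 1
          exact Fin.ext harc
        · have hkle : k ≤ n * (2*m+1) := by omega
          obtain ⟨i, r, hi, hr, hk'⟩ := PathBij.exists_rep n m h1 hkle
          subst hk'
          rw [PathBij.vtx_eq n m σ hi hr] at harc
          by_cases hr0 : r = 0
          · rw [dif_pos hr0] at harc
            rcases hq : p.get ⟨1 + i * (2*m+1) + r + 1, h⟩ with _ | _ | i0 | ⟨i0, c, j0⟩ | q0 | q0
            all_goals rw [hq] at harc
            all_goals simp only [SolidArc, Fin.val_mk] at harc
            obtain ⟨hi0, hj0⟩ := harc
            · have hsome : p[1 + i * (2*m+1) + 1]? = some (V14.lit i0 c j0) := by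
                rw [show 1 + i * (2*m+1) + 1 = 1 + i * (2*m+1) + r + 1 from by omega]
                rw [List.getElem?_eq_getElem (by omega : 1 + i * (2*m+1) + r + 1 < p.length)]
                exact congrArg some hq
              have hcval : σ ⟨i, hi⟩ = c := by
                rw [hσ]
                simp only
                rw [hsome]
              rw [show 1 + i * (2*m+1) + r + 1 = 1 + i * (2*m+1) + 1 from by omega,
                PathBij.vtx_eq n m σ (r := 1) hi (by omega), dif_neg (by omega)]
              rw [hi0, hcval]
              congr 1
              exact Fin.ext (by simp only [Fin.val_mk]; omega)
          · rw [dif_neg hr0] at harc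
            rcases hq : p.get ⟨1 + i * (2*m+1) + r + 1, h⟩ with _ | _ | i0 | ⟨i0, b0, j0⟩ | q0 | q0
            all_goals rw [hq] at harc
            all_goals simp only [SolidArc, Fin.val_mk] at harc
            -- t case
            · obtain ⟨hi0t, hj0t⟩ := harc
              have hrval : r = 2*m := by omega
              have hnval : n = i + 1 := by omega
              have hnexp : n * (2*m+1) = (i+1) * (2*m+1) :=
                congrArg (fun x => x * (2*m+1)) hnval
              have hexp : (i+1) * (2*m+1) = i * (2*m+1) + (2*m+1) := by ring
              rw [show 1 + i * (2*m+1) + r + 1 = n * (2*m+1) + 1 from by omega,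
                PathBij.vtx_last]
            -- u case
            · obtain ⟨hi0, hj0⟩ := harc
              have hrval : r = 2*m := by omega
              have hin : i + 1 < n := by
                have := i0.isLt
                omega
              have hexp : (i+1) * (2*m+1) = i * (2*m+1) + (2*m+1) := by ring
              rw [show 1 + i * (2*m+1) + r + 1 = 1 + (i+1) * (2*m+1) + 0 from by omega,
                PathBij.vtx_eq n m σ (i := i+1) (r := 0) hin (by omega), dif_pos rfl]
              congr 1
              exact Fin.ext hi0
            -- lit case
            · obtain ⟨hi0, hb0, hj0⟩ := harc
              have hj0lt := j0.isLt
              have hrlt : r < 2*m := by omega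
              rw [show 1 + i * (2*m+1) + r + 1 = 1 + i * (2*m+1) + (r+1) from by omega,
                PathBij.vtx_eq n m σ (r := r+1) hi (by omega), dif_neg (by omega)]
              rw [hi0, hb0]
              congr 1
              exact Fin.ext (by simp only [Fin.val_mk]; omega)
    refine ⟨σ, ?_⟩
    simp only [hF]
    apply List.ext_get
    · simp [hlen]
    · intro k h1 h2
      rw [List.get_ofFn]
      exact (key k h2).symm
  refine ⟨F, fun σ => ⟨⟨List.IsChain.imp (fun a b hab => Or.inl hab) (hchain σ),
    hhead σ, hlastF σ⟩, hchain σ⟩, hinj, hcomp, hmem⟩
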